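/- Let φ : ℝ³ → ℝ be 1-Lipschitz, let a, b ∈ ℝ³ with a ≠ b and φ(a) − φ(b) = ‖a − b‖, let s ∈ (0,1) and set z = a + s·(b − a). Then φ is differentiable at z and its gradient at z equals (a − b)/‖a − b‖. -/

import Mathlib

local notation "ℝ³" => EuclideanSpace ℝ (Fin 3)

open Asymptotics

private lemma squeeze_fderiv {F : Type*} [NormedAddCommGroup F] [NormedSpace ℝ F]
    {f g h : F → ℝ} {f' : F →L[ℝ] ℝ} {x : F}
    (hg : HasFDerivAt g f' x) (hh : HasFDerivAt h f' x)
    (hgx : g x = f x) (hhx : h x = f x)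
    (hle : ∀ y, g y ≤ f y) (hle' : ∀ y, f y ≤ h y) : HasFDerivAt f f' x := by
  rw [hasFDerivAt_iff_isLittleO_nhds_zero] at hg hh ⊢
  rw [isLittleO_iff] at hg hh ⊢
  intro ε hε
  filter_upwards [hg hε, hh hε] with y h1 h2
  rw [Real.norm_eq_abs, abs_le]
  rw [Real.norm_eq_abs] at h1 h2
  have h1' := abs_le.mp h1
  have h2' := abs_le.mp h2
  have l1 := hle (x + y)
  have l2 := hle' (x + y)
  constructor
  · have : g (x + y) - g x - f' y ≤ f (x + y) - f x - f' y := by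
      rw [hgx]; linarith
    linarith [h1'.1]
  · have : f (x + y) - f x - f' y ≤ h (x + y) - h x - f' y := by
      rw [hhx]; linarith
    linarith [h2'.2]

private lemma hasFDerivAt_norm_smul {v : ℝ³} (hv : v ≠ 0) {c : ℝ} (hc : 0 < c) :
    HasFDerivAt (fun y : ℝ³ => ‖y‖) (‖v‖⁻¹ • (innerSL ℝ v : ℝ³ →L[ℝ] ℝ)) (c • v) := by
  have hvn : (0 : ℝ) < ‖v‖ := norm_pos_iff.mpr hv
  have hcv : ‖c • v‖ = c * ‖v‖ := by rw [norm_smul, Real.norm_eq_abs, abs_of_pos hc]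
  have h0 : ‖c • v‖ ^ 2 ≠ 0 := by rw [hcv]; positivity
  have H := ((hasStrictFDerivAt_norm_sq (c • v)).hasFDerivAt).sqrt h0
  have heq : (fun y : ℝ³ => Real.sqrt (‖y‖ ^ 2)) = fun y : ℝ³ => ‖y‖ := by
    funext y; exact Real.sqrt_sq (norm_nonneg y)
  rw [heq] at H
  refine H.congr_fderiv ?_
  have hsq : Real.sqrt (‖c • v‖ ^ 2) = c * ‖v‖ := by
    rw [Real.sqrt_sq (norm_nonneg _), hcv]
  rw [hsq]
  ext y
  simp only [ContinuousLinearMap.smul_apply, innerSL_apply_apply, ContinuousLinearMap.smul_apply,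
    smul_eq_mul, inner_smul_left, RCLike.star_def, starRingEnd_apply, star_trivial]
  field_simp
  ring

theorem stmt_9 (φ : ℝ³ → ℝ) (hφ : ∀ x y : ℝ³, |φ x - φ y| ≤ ‖x - y‖)
    (a b : ℝ³) (hab : a ≠ b) (hslope : φ a - φ b = ‖a - b‖)
    (s : ℝ) (hs : s ∈ Set.Ioo (0 : ℝ) 1) (z : ℝ³) (hz : z = a + s • (b - a)) :
    DifferentiableAt ℝ φ z ∧ gradient φ z = ‖a - b‖⁻¹ • (a - b) := by
  obtain ⟨hs0, hs1⟩ := hs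
  set d : ℝ := ‖a - b‖ with hd
  have hab' : a - b ≠ 0 := sub_ne_zero.mpr hab
  have hd0 : (0 : ℝ) < d := norm_pos_iff.mpr hab'
  have hza : z - a = s • (b - a) := by rw [hz]; abel
  have hzb : z - b = (1 - s) • (a - b) := by rw [hz]; module
  have hza' : a - z = s • (a - b) := by rw [hz]; module
  have hnza : ‖a - z‖ = s * d := by
    rw [hza', norm_smul, Real.norm_eq_abs, abs_of_pos hs0]
  have hnzb : ‖z - b‖ = (1 - s) * d := by
    rw [hzb, norm_smul, Real.norm_eq_abs, abs_of_pos (by linarith)]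
  -- equalities at z
  have key1 : φ a - φ z ≤ s * d := by
    have := le_trans (le_abs_self _) (hφ a z); rwa [hnza] at this
  have key2 : φ z - φ b ≤ (1 - s) * d := by
    have := le_trans (le_abs_self _) (hφ z b); rwa [hnzb] at this
  have eq1 : φ a - φ z = s * d := by nlinarith
  have eq2 : φ z - φ b = (1 - s) * d := by nlinarith
  -- the linear functional
  set L : ℝ³ →L[ℝ] ℝ := ‖a - b‖⁻¹ • (innerSL ℝ (a - b) : ℝ³ →L[ℝ] ℝ) with hL
  -- h: upper cone
  have hsubb : HasFDerivAt (fun x : ℝ³ => x - b) (ContinuousLinearMap.id ℝ ℝ³) z :=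
    (hasFDerivAt_id z).sub_const b
  have hnormb : HasFDerivAt (fun y : ℝ³ => ‖y‖) L (z - b) := by
    rw [hzb]; exact hasFDerivAt_norm_smul hab' (by linarith)
  have hh : HasFDerivAt (fun x : ℝ³ => φ b + ‖x - b‖) L z := by
    have := (hnormb.comp z hsubb).const_add (φ b)
    simpa using this
  -- g: lower cone
  have hba' : b - a ≠ 0 := sub_ne_zero.mpr (Ne.symm hab)
  have hsuba : HasFDerivAt (fun x : ℝ³ => x - a) (ContinuousLinearMap.id ℝ ℝ³) z :=
    (hasFDerivAt_id z).sub_const a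
  have hnorma : HasFDerivAt (fun y : ℝ³ => ‖y‖)
      (‖b - a‖⁻¹ • (innerSL ℝ (b - a) : ℝ³ →L[ℝ] ℝ)) (z - a) := by
    rw [hza]; exact hasFDerivAt_norm_smul hba' hs0
  have hnegL : -(‖b - a‖⁻¹ • (innerSL ℝ (b - a) : ℝ³ →L[ℝ] ℝ)) = L := by
    ext y
    have : b - a = -(a - b) := by abel
    simp only [ContinuousLinearMap.neg_apply, ContinuousLinearMap.smul_apply, innerSL_apply_apply,
      smul_eq_mul, hL, this, norm_neg, inner_neg_left]
    ring
  have hg : HasFDerivAt (fun x : ℝ³ => φ a - ‖x - a‖) L z := by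
    have := (hnorma.comp z hsuba).const_sub (φ a)
    rw [← hnegL]
    simpa using this
  -- squeeze
  have hgx : φ a - ‖z - a‖ = φ z := by rw [← norm_neg, neg_sub, hnza]; linarith
  have hhx : φ b + ‖z - b‖ = φ z := by rw [hnzb]; linarith
  have hle : ∀ y, φ a - ‖y - a‖ ≤ φ y := by
    intro y
    have := le_trans (le_abs_self _) (hφ a y)
    rw [← norm_neg, neg_sub] at this
    linarith
  have hle' : ∀ y, φ y ≤ φ b + ‖y - b‖ := by
    intro y
    have := le_trans (le_abs_self _) (hφ y b)
    linarith
  have hF : HasFDerivAt φ L z := squeeze_fderiv hg hh hgx hhx hle hle'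
  have hG : HasGradientAt φ (‖a - b‖⁻¹ • (a - b)) z := by
    rw [hasGradientAt_iff_hasFDerivAt]
    refine hF.congr_fderiv ?_
    ext y
    simp [hL, InnerProductSpace.toDual_apply_apply, inner_smul_left]
  exact ⟨hF.differentiableAt, hG.gradient⟩
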